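/- There do not exist positive integers n_1, n_2, n_3 with n_1 + n_2 + n_3 = n such that D(C_n, x) = D(C_{n_1}, x)·D(C_{n_2}, x)·D(C_{n_3}, x), in the case n ≡ 2 (mod 4) and n_1 ≡ n_2 ≡ n_3 ≡ 2 (mod 4). -/

import Mathlib

open Polynomial SimpleGraph

/-- `S` is a dominating set of `G`: every vertex is in `S` or adjacent to a vertex of `S`. -/
def IsDomSet {V : Type*} (G : SimpleGraph V) (S : Finset V) : Prop :=
  ∀ v : V, v ∈ S ∨ ∃ u ∈ S, G.Adj u v

/-- The domination polynomial `D(G,x) = ∑ d(G,i) xⁱ`. -/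
noncomputable def domPoly {V : Type*} [Fintype V] (G : SimpleGraph V) : Polynomial ℤ :=
  ∑ i ∈ Finset.range (Fintype.card V + 1),
    (Nat.card {S : Finset V // IsDomSet G S ∧ S.card = i} : ℤ) • (X : Polynomial ℤ) ^ i

namespace NoThreeAux

/-! ### Evaluation functionals at -1 -/

noncomputable def e0 (p : Polynomial ℤ) : ℤ := p.eval (-1)
noncomputable def e1 (p : Polynomial ℤ) : ℤ := p.derivative.eval (-1)
noncomputable def e2 (p : Polynomial ℤ) : ℤ := p.derivative.derivative.eval (-1)

@[simp] lemma e0_add (p q : Polynomial ℤ) : e0 (p + q) = e0 p + e0 q := by simp [e0]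
@[simp] lemma e1_add (p q : Polynomial ℤ) : e1 (p + q) = e1 p + e1 q := by simp [e1]
@[simp] lemma e2_add (p q : Polynomial ℤ) : e2 (p + q) = e2 p + e2 q := by simp [e2]
@[simp] lemma e0_zero : e0 0 = 0 := by simp [e0]
@[simp] lemma e1_zero : e1 0 = 0 := by simp [e1]
@[simp] lemma e2_zero : e2 0 = 0 := by simp [e2]
@[simp] lemma e0_one : e0 1 = 1 := by simp [e0]
@[simp] lemma e1_one : e1 1 = 0 := by simp [e1]
@[simp] lemma e2_one : e2 1 = 0 := by simp [e2]
@[simp] lemma e0_X : e0 X = -1 := by simp [e0]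
@[simp] lemma e1_X : e1 X = 1 := by simp [e1]
@[simp] lemma e2_X : e2 X = 0 := by simp [e2]

@[simp] lemma e0_Xmul (p : Polynomial ℤ) : e0 (X * p) = - e0 p := by simp [e0]
@[simp] lemma e1_Xmul (p : Polynomial ℤ) : e1 (X * p) = e0 p - e1 p := by
  simp [e1, e0, derivative_mul]; try ring
@[simp] lemma e2_Xmul (p : Polynomial ℤ) : e2 (X * p) = 2 * e1 p - e2 p := by
  simp [e2, e1, derivative_mul]; try ring

lemma e0_mul (p q : Polynomial ℤ) : e0 (p * q) = e0 p * e0 q := by simp [e0]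
lemma e1_mul (p q : Polynomial ℤ) : e1 (p * q) = e1 p * e0 q + e0 p * e1 q := by
  simp [e1, e0, derivative_mul]; try ring
lemma e2_mul (p q : Polynomial ℤ) :
    e2 (p * q) = e2 p * e0 q + 2 * (e1 p * e1 q) + e0 p * e2 q := by
  simp [e2, e1, e0, derivative_mul]; try ring

/-! ### The transfer recursion -/

noncomputable def r : ℕ → Bool → Bool → Bool → Bool → Polynomial ℤ
  | 0, a, b, p, q => if (a || b || p) && (b || p || q) then 1 else 0
  | (j+1), a, b, p, q => (if a || b then r j b false p q else 0) + X * r j b true p q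

lemma r_zero (a b p q : Bool) :
    r 0 a b p q = if (a || b || p) && (b || p || q) then 1 else 0 := rfl

lemma r_succ (j : ℕ) (a b p q : Bool) :
    r (j+1) a b p q = (if a || b then r j b false p q else 0) + X * r j b true p q := rfl

lemma r_q (j : ℕ) (a b q q' : Bool) : r j a b true q = r j a b true q' := by
  induction j generalizing a b with
  | zero => simp [r_zero]
  | succ j ih => rw [r_succ, r_succ, ih b false, ih b true]

lemma r_FT (j : ℕ) (p q : Bool) : r j false true p q = r j true true p q := by
  cases j with
  | zero => simp [r_zero]
  | succ j => rw [r_succ, r_succ]; simp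

lemma r_FF (j : ℕ) (p q : Bool) : r (j+1) false false p q = X * r j false true p q := by
  rw [r_succ]; simp

lemma trib (j : ℕ) (p q : Bool) :
    r (j+3) true true p q
      = X * (r (j+2) true true p q + r (j+1) true true p q + r j true true p q) := by
  rw [show j+3 = (j+2)+1 from rfl, r_succ]
  rw [show j+2 = (j+1)+1 from rfl, r_succ]
  rw [r_FF, r_FT, r_FT]
  simp only [Bool.or_self, Bool.true_or, Bool.or_false, Bool.or_true, reduceIte]
  ring

noncomputable def A (j : ℕ) : Polynomial ℤ := r j true true false false
noncomputable def B (j : ℕ) : Polynomial ℤ := r j true true false true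
noncomputable def C (j : ℕ) : Polynomial ℤ := r j true true true true

lemma tribA (j : ℕ) : A (j+3) = X * (A (j+2) + A (j+1) + A j) := trib j false false
lemma tribB (j : ℕ) : B (j+3) = X * (B (j+2) + B (j+1) + B j) := trib j false true
lemma tribC (j : ℕ) : C (j+3) = X * (C (j+2) + C (j+1) + C j) := trib j true true

/-- value triple -/
def Tr (p : Polynomial ℤ) (x y z : ℤ) : Prop := e0 p = x ∧ e1 p = y ∧ e2 p = z

lemma Tr_step {u : ℕ → Polynomial ℤ}
    (hu : ∀ j, u (j+3) = X * (u (j+2) + u (j+1) + u j)) {j : ℕ}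
    {x y z x' y' z' x'' y'' z'' : ℤ}
    (h0 : Tr (u j) x y z) (h1 : Tr (u (j+1)) x' y' z') (h2 : Tr (u (j+2)) x'' y'' z'') :
    Tr (u (j+3)) (-(x + x' + x'')) ((x + x' + x'') - (y + y' + y''))
      (2 * (y + y' + y'') - (z + z' + z'')) := by
  obtain ⟨a0, a1, a2⟩ := h0
  obtain ⟨b0, b1, b2⟩ := h1
  obtain ⟨c0, c1, c2⟩ := h2
  refine ⟨?_, ?_, ?_⟩ <;>
    rw [hu] <;> simp [a0, a1, a2, b0, b1, b2, c0, c1, c2] <;> ring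

lemma Tr_congr {p : Polynomial ℤ} {x y z x' y' z' : ℤ} (h : Tr p x y z)
    (hx : x = x') (hy : y = y') (hz : z = z') : Tr p x' y' z' := by
  subst hx; subst hy; subst hz; exact h

end NoThreeAux

namespace NoThreeAux

set_option maxHeartbeats 1000000 in
lemma closed (t : ℕ) :
    Tr (A (4*t)) 1 (-(t:ℤ)) ((t:ℤ)*(t-1)) ∧
    Tr (A (4*t+1)) (-1) (2*(t:ℤ)+1) (-(3*(t:ℤ)^2+t)) ∧
    Tr (A (4*t+2)) 0 (-((t:ℤ)+1)) (3*(t:ℤ)^2+5*t+2) ∧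
    Tr (A (4*t+3)) 0 0 (-(((t:ℤ)+1)*(t+2))) ∧
    Tr (B (4*t)) 1 (-(t:ℤ)) (-(2*(t:ℤ))) ∧
    Tr (B (4*t+1)) 0 ((t:ℤ)+1) (-(2*(t:ℤ)*(t+1))) ∧
    Tr (B (4*t+2)) (-1) (t:ℤ) (4*(t:ℤ)+2) ∧
    Tr (B (4*t+3)) 0 (-((t:ℤ)+1)) (2*(t:ℤ)*(t+1)) ∧
    Tr (C (4*t)) 1 (-(2*(t:ℤ))) (3*(t:ℤ)*(t-1)) ∧
    Tr (C (4*t+1)) 0 ((t:ℤ)+1) (-(3*(t:ℤ)*(t+1))) ∧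
    Tr (C (4*t+2)) 0 0 (((t:ℤ)+1)*(t+2)) ∧
    Tr (C (4*t+3)) (-1) (t:ℤ) (-((t:ℤ)*(t-1))) := by
  induction t with
  | zero =>
    have z1 : r 0 true false false false = 0 := by rw [r_zero]; norm_num
    have z2 : r 0 false true false false = 1 := by rw [r_zero]; norm_num
    have z3 : r 0 false false false false = 0 := by rw [r_zero]; norm_num
    have z4 : r 0 true true false false = 1 := by rw [r_zero]; norm_num
    have z5 : r 0 false false false true = 0 := by rw [r_zero]; norm_num
    have z6 : r 0 false true false true = 1 := by rw [r_zero]; norm_num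
    have z7 : r 0 true false false true = 1 := by rw [r_zero]; norm_num
    have z8 : r 0 true true false true = 1 := by rw [r_zero]; norm_num
    have z9 : r 0 false false true true = 1 := by rw [r_zero]; norm_num
    have z10 : r 0 false true true true = 1 := by rw [r_zero]; norm_num
    have z11 : r 0 true false true true = 1 := by rw [r_zero]; norm_num
    have z12 : r 0 true true true true = 1 := by rw [r_zero]; norm_num
    have w1 : r 1 true false false false = X := by
      rw [r_succ, z3, z2]; simp
    have w2 : r 1 true false false true = X := by
      rw [r_succ, z5, z6]; simp
    have w3 : r 1 true false true true = 1 + X := by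
      rw [r_succ, z9, z10]; simp
    have hA0 : A 0 = 1 := z4
    have hA1 : A 1 = X := by rw [A, r_succ, z1, z4]; simp
    have hA2 : A 2 = X + X * X := by
      rw [A, show (2:ℕ) = 1+1 from rfl, r_succ, w1]
      rw [show r 1 true true false false = A 1 from rfl, hA1]
      simp
    have hB0 : B 0 = 1 := z8
    have hB1 : B 1 = 1 + X := by rw [B, r_succ, z7, z8]; simp
    have hB2 : B 2 = X + X * (1 + X) := by
      rw [B, show (2:ℕ) = 1+1 from rfl, r_succ, w2]
      rw [show r 1 true true false true = B 1 from rfl, hB1]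
      simp
    have hC0 : C 0 = 1 := z12
    have hC1 : C 1 = 1 + X := by rw [C, r_succ, z11, z12]; simp
    have hC2 : C 2 = (1 + X) + X * (1 + X) := by
      rw [C, show (2:ℕ) = 1+1 from rfl, r_succ, w3]
      rw [show r 1 true true true true = C 1 from rfl, hC1]
      simp
    have tA0 : Tr (A 0) 1 0 0 := by rw [hA0]; exact ⟨by simp, by simp, by simp⟩
    have tA1 : Tr (A 1) (-1) 1 0 := by rw [hA1]; exact ⟨by simp, by simp, by simp⟩
    have tA2 : Tr (A 2) 0 (-1) 2 := by
      rw [hA2]; refine ⟨by simp, by simp, by simp⟩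
    have tB0 : Tr (B 0) 1 0 0 := by rw [hB0]; exact ⟨by simp, by simp, by simp⟩
    have tB1 : Tr (B 1) 0 1 0 := by rw [hB1]; exact ⟨by simp, by simp, by simp⟩
    have tB2 : Tr (B 2) (-1) 0 2 := by rw [hB2]; refine ⟨by simp, by simp, by simp⟩
    have tC0 : Tr (C 0) 1 0 0 := by rw [hC0]; exact ⟨by simp, by simp, by simp⟩
    have tC1 : Tr (C 1) 0 1 0 := by rw [hC1]; exact ⟨by simp, by simp, by simp⟩
    have tC2 : Tr (C 2) 0 0 2 := by rw [hC2]; refine ⟨by simp, by simp, by simp⟩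
    have tA3 := Tr_step tribA tA0 tA1 tA2
    have tB3 := Tr_step tribB tB0 tB1 tB2
    have tC3 := Tr_step tribC tC0 tC1 tC2
    refine ⟨Tr_congr tA0 (by norm_num) (by norm_num) (by norm_num),
      Tr_congr tA1 (by norm_num) (by norm_num) (by norm_num),
      Tr_congr tA2 (by norm_num) (by norm_num) (by norm_num),
      Tr_congr tA3 (by norm_num) (by norm_num) (by norm_num),
      Tr_congr tB0 (by norm_num) (by norm_num) (by norm_num),
      Tr_congr tB1 (by norm_num) (by norm_num) (by norm_num),
      Tr_congr tB2 (by norm_num) (by norm_num) (by norm_num),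
      Tr_congr tB3 (by norm_num) (by norm_num) (by norm_num),
      Tr_congr tC0 (by norm_num) (by norm_num) (by norm_num),
      Tr_congr tC1 (by norm_num) (by norm_num) (by norm_num),
      Tr_congr tC2 (by norm_num) (by norm_num) (by norm_num),
      Tr_congr tC3 (by norm_num) (by norm_num) (by norm_num)⟩
  | succ t ih =>
    obtain ⟨a0, a1, a2, a3, b0, b1, b2, b3, c0, c1, c2, c3⟩ := ih
    have a4 := Tr_step tribA a1 a2 a3
    have a5 := Tr_step tribA a2 a3 a4
    have a6 := Tr_step tribA a3 a4 a5
    have a7 := Tr_step tribA a4 a5 a6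
    have b4 := Tr_step tribB b1 b2 b3
    have b5 := Tr_step tribB b2 b3 b4
    have b6 := Tr_step tribB b3 b4 b5
    have b7 := Tr_step tribB b4 b5 b6
    have c4 := Tr_step tribC c1 c2 c3
    have c5 := Tr_step tribC c2 c3 c4
    have c6 := Tr_step tribC c3 c4 c5
    have c7 := Tr_step tribC c4 c5 c6
    refine ⟨Tr_congr a4 (by push_cast; try ring) (by push_cast; try ring) (by push_cast; try ring),
      Tr_congr a5 (by push_cast; try ring) (by push_cast; try ring) (by push_cast; try ring),
      Tr_congr a6 (by push_cast; try ring) (by push_cast; try ring) (by push_cast; try ring),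
      Tr_congr a7 (by push_cast; try ring) (by push_cast; try ring) (by push_cast; try ring),
      Tr_congr b4 (by push_cast; try ring) (by push_cast; try ring) (by push_cast; try ring),
      Tr_congr b5 (by push_cast; try ring) (by push_cast; try ring) (by push_cast; try ring),
      Tr_congr b6 (by push_cast; try ring) (by push_cast; try ring) (by push_cast; try ring),
      Tr_congr b7 (by push_cast; try ring) (by push_cast; try ring) (by push_cast; try ring),
      Tr_congr c4 (by push_cast; try ring) (by push_cast; try ring) (by push_cast; try ring),
      Tr_congr c5 (by push_cast; try ring) (by push_cast; try ring) (by push_cast; try ring),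
      Tr_congr c6 (by push_cast; try ring) (by push_cast; try ring) (by push_cast; try ring),
      Tr_congr c7 (by push_cast; try ring) (by push_cast; try ring) (by push_cast; try ring)⟩

end NoThreeAux

namespace NoThreeAux

open Finset

/-! ### words -/

/-- linear "no three consecutive falses" -/
def good : List Bool → Bool
  | a :: b :: c :: L => (a || b || c) && good (b :: c :: L)
  | _ => true

lemma good_nil : good [] = true := rfl
lemma good_one (a : Bool) : good [a] = true := rfl
lemma good_two (a b : Bool) : good [a, b] = true := rfl
lemma good_cons (a b c : Bool) (L : List Bool) :
    good (a :: b :: c :: L) = ((a || b || c) && good (b :: c :: L)) := rfl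

theorem good_iff : ∀ L : List Bool, good L = true ↔
    ∀ i : ℕ, i + 3 ≤ L.length →
      (L.getD i false || L.getD (i+1) false || L.getD (i+2) false) = true
  | [] => by simp [good_nil]
  | [a] => by simp [good_one]
  | [a, b] => by simp [good_two]
  | a :: b :: c :: L => by
    rw [good_cons, Bool.and_eq_true, good_iff (b :: c :: L)]
    constructor
    · rintro ⟨h0, h⟩ i hi
      match i with
      | 0 => simpa using h0
      | (i+1) =>
        have := h i (by simpa using hi)
        simpa using this
    · intro h
      refine ⟨by simpa using h 0 (by simp), fun i hi => ?_⟩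
      have := h (i+1) (by simp at hi ⊢; omega)
      simpa using this

/-- all words of a given length -/
def W : ℕ → Finset (List Bool)
  | 0 => {[]}
  | n+1 => (W n).image (List.cons false) ∪ (W n).image (List.cons true)

lemma mem_W {n : ℕ} {l : List Bool} : l ∈ W n ↔ l.length = n := by
  induction n generalizing l with
  | zero => simp [W]
  | succ n ih =>
    simp only [W, mem_union, mem_image]
    constructor
    · rintro (⟨m, hm, rfl⟩ | ⟨m, hm, rfl⟩) <;> simp [ih.1 hm]
    · intro hl
      match l with
      | [] => simp at hl
      | x :: m =>
        have hm : m ∈ W n := ih.2 (by simpa using hl)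
        cases x
        · exact Or.inl ⟨m, hm, rfl⟩
        · exact Or.inr ⟨m, hm, rfl⟩

lemma sum_W_succ (n : ℕ) (f : List Bool → Polynomial ℤ) :
    ∑ l ∈ W (n+1), f l = (∑ l ∈ W n, f (false :: l)) + ∑ l ∈ W n, f (true :: l) := by
  rw [show W (n+1) = (W n).image (List.cons false) ∪ (W n).image (List.cons true) from rfl]
  rw [Finset.sum_union, Finset.sum_image (fun _ _ _ _ h => by injection h),
    Finset.sum_image (fun _ _ _ _ h => by injection h)]
  rw [Finset.disjoint_left]
  rintro a ha hb
  simp only [mem_image] at ha hb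
  obtain ⟨u, -, rfl⟩ := ha
  obtain ⟨v, -, hv⟩ := hb
  injection hv with h1 h2
  exact Bool.noConfusion h1

/-- the word-sum equals the transfer recursion -/
theorem cws_eq_r : ∀ (M : ℕ) (a b p q : Bool),
    (∑ l ∈ W M, if good (a :: b :: (l ++ [p, q])) = true
        then (X : Polynomial ℤ) ^ (l.count true) else 0) = r M a b p q
  | 0, a, b, p, q => by
    rw [show W 0 = {[]} from rfl, Finset.sum_singleton, r_zero]
    simp only [List.nil_append, List.count_nil, pow_zero]
    rw [show good ([a, b, p, q]) = ((a || b || p) && ((b || p || q) && true)) from rfl]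
    simp
  | (M+1), a, b, p, q => by
    rw [sum_W_succ, r_succ, ← cws_eq_r M b false p q, ← cws_eq_r M b true p q]
    congr 1
    · rcases hab : a || b with hf | ht
      · rw [Finset.sum_eq_zero]
        · simp
        intro l _
        rw [show (false :: l) ++ [p,q] = false :: (l ++ [p,q]) from rfl, good_cons]
        have : (a || b || false) = false := by simp [hab]
        rw [this]
        simp
      · simp only [if_true]
        refine Finset.sum_congr rfl fun l _ => ?_
        rw [show (false :: l) ++ [p,q] = false :: (l ++ [p,q]) from rfl, good_cons]
        have : (a || b || false) = true := by simp [hab]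
        rw [this, Bool.true_and]
        simp [List.count_cons]
    · rw [Finset.mul_sum]
      refine Finset.sum_congr rfl fun l _ => ?_
      rw [show (true :: l) ++ [p,q] = true :: (l ++ [p,q]) from rfl, good_cons]
      have : (a || b || true) = true := by simp
      rw [this, Bool.true_and, List.count_cons_self, mul_ite, mul_zero, pow_succ]
      split
      · ring
      · rfl

end NoThreeAux

namespace NoThreeAux

open Finset

def toW {m : ℕ} (S : Finset (Fin m)) : List Bool := List.ofFn (fun i => decide (i ∈ S))

@[simp] lemma length_toW {m : ℕ} (S : Finset (Fin m)) : (toW S).length = m := by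
  simp [toW]

lemma getD_toW {m : ℕ} (S : Finset (Fin m)) {i : ℕ} (h : i < m) :
    (toW S).getD i false = decide ((⟨i, h⟩ : Fin m) ∈ S) := by
  rw [toW, List.getD_eq_getElem _ _ (by simpa using h), List.getElem_ofFn]

lemma count_ofFn {m : ℕ} (f : Fin m → Bool) :
    (List.ofFn f).count true = ∑ i : Fin m, (if f i then 1 else 0) := by
  induction m with
  | zero => simp
  | succ n ih =>
    rw [List.ofFn_succ, Fin.sum_univ_succ, List.count_cons, ih]
    cases h : f 0 <;> simp [h] <;> omega

lemma count_toW {m : ℕ} (S : Finset (Fin m)) : (toW S).count true = S.card := by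
  rw [toW, count_ofFn]
  rw [Finset.card_eq_sum_ones]
  rw [← Finset.sum_filter]
  congr 1
  ext v
  simp

open Fin.CommRing in
lemma isDomSet_cycle_iff {M : ℕ} (S : Finset (Fin (M+2))) :
    IsDomSet (cycleGraph (M+2)) S ↔ ∀ v : Fin (M+2), v ∈ S ∨ v + 1 ∈ S ∨ v + 1 + 1 ∈ S := by
  constructor
  · intro h v
    rcases h (v+1) with hv | ⟨u, hu, hadj⟩
    · exact Or.inr (Or.inl hv)
    · rw [cycleGraph_adj] at hadj
      rcases hadj with h1 | h1
      · have h2 : u = v + 1 + 1 := by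
          have h3 := sub_eq_iff_eq_add.mp h1
          rw [h3]; ring
        exact Or.inr (Or.inr (h2 ▸ hu))
      · have h2 : u = v := by
          have h3 := sub_eq_iff_eq_add.mp h1
          linear_combination -h3
        exact Or.inl (h2 ▸ hu)
  · intro h v
    rcases h (v - 1) with hv | hv | hv
    · refine Or.inr ⟨v - 1, hv, ?_⟩
      rw [cycleGraph_adj]
      right
      exact sub_sub_cancel v 1
    · left
      rwa [sub_add_cancel] at hv
    · refine Or.inr ⟨v - 1 + 1 + 1, hv, ?_⟩
      rw [cycleGraph_adj]
      left
      rw [sub_add_cancel]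
      exact add_sub_cancel_left v 1

lemma getD_LL {M : ℕ} (S : Finset (Fin (M+2))) (i : ℕ) (h : i < M+2+2) :
    (toW S ++ (toW S).take 2).getD i false
      = decide ((⟨i % (M+2), Nat.mod_lt _ (by omega)⟩ : Fin (M+2)) ∈ S) := by
  rcases lt_or_ge i (M+2) with hi | hi
  · rw [List.getD_append _ _ _ _ (by rw [length_toW]; exact hi)]
    have hfin : (⟨i, hi⟩ : Fin (M+2)) = ⟨i % (M+2), Nat.mod_lt _ (by omega)⟩ :=
      Fin.ext (by simp [Nat.mod_eq_of_lt hi])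
    rw [getD_toW S hi, hfin]
  · rw [List.getD_append_right _ _ _ _ (by rw [length_toW]; exact hi), length_toW]
    have h2 : i - (M+2) < 2 := by omega
    have h2' : i - (M+2) < (M+2) := by omega
    rw [List.getD_eq_getElem?_getD, List.getElem?_take_of_lt h2,
      ← List.getD_eq_getElem?_getD]
    have hfin : (⟨i - (M+2), h2'⟩ : Fin (M+2)) = ⟨i % (M+2), Nat.mod_lt _ (by omega)⟩ :=
      Fin.ext (by show i - (M+2) = i % (M+2); rw [Nat.mod_eq_sub_mod hi, Nat.mod_eq_of_lt h2'])
    rw [getD_toW S h2', hfin]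

set_option maxHeartbeats 1000000 in
lemma dom_iff_good {M : ℕ} (S : Finset (Fin (M+2))) :
    IsDomSet (cycleGraph (M+2)) S ↔ good (toW S ++ (toW S).take 2) = true := by
  rw [isDomSet_cycle_iff, good_iff]
  have hlen : (toW S ++ (toW S).take 2).length = (M+2) + 2 := by
    rw [List.length_append, length_toW, List.length_take, length_toW]
    omega
  have m1 : ∀ a : ℕ, (a % (M+2) + 1) % (M+2) = (a+1) % (M+2) := by
    intro a
    conv_rhs => rw [Nat.add_mod]
    rw [Nat.mod_eq_of_lt (show 1 < M+2 by omega)]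
  have key : ∀ (i : ℕ) (hi : i < M + 2),
      ((toW S ++ (toW S).take 2).getD i false || (toW S ++ (toW S).take 2).getD (i+1) false
        || (toW S ++ (toW S).take 2).getD (i+2) false) = true
      ↔ ((⟨i, hi⟩ : Fin (M+2)) ∈ S ∨ (⟨i, hi⟩ : Fin (M+2)) + 1 ∈ S
          ∨ (⟨i, hi⟩ : Fin (M+2)) + 1 + 1 ∈ S) := by
    intro i hi
    have e0' := getD_LL S i (by omega)
    have e1' := getD_LL S (i+1) (by omega)
    have e2' := getD_LL S (i+2) (by omega)
    rw [e0', e1', e2']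
    have f0 : (⟨i % (M+2), Nat.mod_lt _ (by omega)⟩ : Fin (M+2)) = ⟨i, hi⟩ :=
      Fin.ext (by simp [Nat.mod_eq_of_lt hi])
    have f1 : (⟨(i+1) % (M+2), Nat.mod_lt _ (by omega)⟩ : Fin (M+2)) = ⟨i, hi⟩ + 1 := by
      refine Fin.ext ?_
      rw [Fin.val_add, Fin.val_one]
    have f2 : (⟨(i+2) % (M+2), Nat.mod_lt _ (by omega)⟩ : Fin (M+2)) = ⟨i, hi⟩ + 1 + 1 := by
      refine Fin.ext ?_
      rw [Fin.val_add, Fin.val_add, Fin.val_one, m1]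
    rw [f0, f1, f2]
    simp [or_assoc]
  constructor
  · intro h i hile
    have hi : i < M + 2 := by omega
    exact (key i hi).mpr (h ⟨i, hi⟩)
  · intro h v
    have := (key v.val v.isLt).mp (h v.val (by omega))
    simpa using this

end NoThreeAux

namespace NoThreeAux

open Finset

instance decDom {m : ℕ} : DecidablePred (IsDomSet (cycleGraph m)) := fun S =>
  decidable_of_iff (∀ v, v ∈ S ∨ ∃ u ∈ S, (cycleGraph m).Adj u v) Iff.rfl

lemma domPoly_eq_sum {V : Type*} [Fintype V] [DecidableEq V] (G : SimpleGraph V)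
    [DecidablePred (IsDomSet G)] :
    domPoly G = ∑ S ∈ univ.filter (fun S => IsDomSet G S), (X : Polynomial ℤ) ^ S.card := by
  have h1 : ∑ S ∈ univ.filter (fun S => IsDomSet G S), (X : Polynomial ℤ) ^ S.card
      = ∑ i ∈ Finset.range (Fintype.card V + 1),
          ∑ S ∈ (univ.filter (fun S => IsDomSet G S)).filter (fun S => S.card = i),
            (X : Polynomial ℤ) ^ S.card :=
    (Finset.sum_fiberwise_of_maps_to
      (fun S _ => Finset.mem_range.mpr (Nat.lt_succ_of_le
        (le_trans (Finset.card_le_univ S) (le_of_eq (Finset.card_univ)))) ) _).symm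
  rw [domPoly, h1]
  refine Finset.sum_congr rfl fun i _ => ?_
  rw [Finset.filter_filter]
  have h2 : Nat.card {S : Finset V // IsDomSet G S ∧ S.card = i}
      = (univ.filter (fun S => IsDomSet G S ∧ S.card = i)).card := by
    rw [Nat.card_eq_fintype_card, Fintype.card_subtype]
  rw [h2, natCast_zsmul, ← Finset.sum_const]
  refine Finset.sum_congr rfl fun S hS => ?_
  simp only [Finset.mem_filter] at hS
  rw [hS.2.2]

lemma sum_dom_eq (M : ℕ) :
    (∑ S ∈ univ.filter (fun S => IsDomSet (cycleGraph (M+2)) S), (X : Polynomial ℤ) ^ S.card)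
      = ∑ l ∈ W (M+2),
          (if good (l ++ l.take 2) = true then (X : Polynomial ℤ) ^ (l.count true) else 0) := by
  rw [Finset.sum_filter]
  refine Finset.sum_nbij' (i := fun S => toW S)
    (j := fun l => univ.filter (fun v : Fin (M+2) => l.getD v.val false = true))
    (fun S _ => mem_W.mpr (length_toW S)) (fun l _ => mem_univ _) ?_ ?_ ?_
  · intro S _
    ext v
    simp only [Finset.mem_filter, Finset.mem_univ, true_and]
    rw [getD_toW S v.isLt]
    simp
  · intro l hl
    have hlen : l.length = M + 2 := mem_W.mp hl
    refine List.ext_getElem (by simp [hlen]) ?_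
    intro i h1 h2
    simp only [toW]
    rw [List.getElem_ofFn]
    have h3 : i < M + 2 := by simpa [hlen] using h2
    simp only [Finset.mem_filter, Finset.mem_univ, true_and]
    rw [List.getD_eq_getElem _ _ (by omega)]
    rcases Bool.dichotomy (l[i]'h2) with hb | hb <;> simp [hb]
  · intro S _
    rw [count_toW]
    exact if_congr (dom_iff_good S) rfl rfl

lemma sum_W_eq (M : ℕ) :
    (∑ l ∈ W (M+2),
        (if good (l ++ l.take 2) = true then (X : Polynomial ℤ) ^ (l.count true) else 0))
      = (r M false false false false + X * r M false true false true)
        + (X * r M true false true false + X * X * r M true true true true) := by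
  rw [sum_W_succ, sum_W_succ, sum_W_succ]
  have hsplit : ∀ a b : Bool, ∀ l : List Bool,
      ((a :: b :: l) ++ (a :: b :: l).take 2) = a :: b :: (l ++ [a, b]) := by
    intro a b l
    simp
  have key : ∀ a b : Bool,
      (∑ l ∈ W M, if good ((a :: b :: l) ++ (a :: b :: l).take 2) = true
          then (X : Polynomial ℤ) ^ ((a :: b :: l).count true) else 0)
        = (if a then X else 1) * (if b then X else 1) * r M a b a b := by
    intro a b
    rw [← cws_eq_r M a b a b, Finset.mul_sum]
    refine Finset.sum_congr rfl fun l _ => ?_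
    rw [hsplit a b l]
    rw [mul_ite, mul_zero]
    refine if_congr Iff.rfl ?_ rfl
    cases a <;> cases b <;>
      simp [List.count_cons, pow_succ] <;> ring
  rw [key false false, key false true, key true false, key true true]
  simp
  try ring

theorem domPoly_cycle (M : ℕ) :
    domPoly (cycleGraph (M+2))
      = (r M false false false false + X * r M false true false true)
        + (X * r M true false true false + X * X * r M true true true true) := by
  rw [domPoly_eq_sum, sum_dom_eq, sum_W_eq]

end NoThreeAux

namespace NoThreeAux

lemma r_TF (j : ℕ) (p q : Bool) :
    r (j+2) true false p q = X * r (j+1) true true p q + X * r j true true p q := by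
  rw [show j+2 = (j+1)+1 from rfl, r_succ, r_FF, r_FT, r_FT]
  simp only [Bool.true_or, reduceIte]
  ring

lemma cycle_triple (k : ℕ) :
    Tr (domPoly (cycleGraph (4*k+2))) (-1) 0 (4*(k:ℤ)^2+6*k+2) := by
  cases k with
  | zero =>
    show Tr (domPoly (cycleGraph (0+2))) (-1) 0 _
    rw [domPoly_cycle 0]
    have z1 : r 0 false false false false = 0 := by rw [r_zero]; norm_num
    have z2 : r 0 false true false true = 1 := by rw [r_zero]; norm_num
    have z3 : r 0 true false true false = 1 := by rw [r_zero]; norm_num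
    have z4 : r 0 true true true true = 1 := by rw [r_zero]; norm_num
    rw [z1, z2, z3, z4]
    refine ⟨by simp, by simp, by simp⟩
  | succ k =>
    have Hk := closed k
    have Hk1 := closed (k+1)
    have a3 := Hk.2.2.2.1
    have c2 := Hk.2.2.2.2.2.2.2.2.2.2.1
    have c3 := Hk.2.2.2.2.2.2.2.2.2.2.2
    have b4 := Hk1.2.2.2.2.1
    have c4 := Hk1.2.2.2.2.2.2.2.2.1
    have t1 : r (4*k+4) false false false false = X * A (4*k+3) := by
      rw [show (4*k+4 : ℕ) = (4*k+3)+1 from rfl, r_FF, r_FT]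
      rfl
    have t2 : r (4*k+4) false true false true = B (4*k+4) := r_FT (4*k+4) false true
    have t3 : r (4*k+4) true false true false = X * C (4*k+3) + X * C (4*k+2) := by
      rw [show (4*k+4 : ℕ) = (4*k+2)+2 from rfl, r_TF]
      rw [r_q (4*k+2+1) true true false true, r_q (4*k+2) true true false true]
      rfl
    have hP : domPoly (cycleGraph ((4*k+4)+2))
        = X * A (4*k+3) + X * B (4*k+4)
          + (X * (X * C (4*k+3) + X * C (4*k+2)) + X * (X * C (4*k+4))) := by
      rw [domPoly_cycle (4*k+4), t1, t2, t3]
      rw [show r (4*k+4) true true true true = C (4*k+4) from rfl]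
      ring
    show Tr (domPoly (cycleGraph ((4*k+4)+2))) _ _ _
    rw [Tr, hP]
    obtain ⟨a30, a31, a32⟩ := a3
    obtain ⟨c20, c21, c22⟩ := c2
    obtain ⟨c30, c31, c32⟩ := c3
    obtain ⟨b40, b41, b42⟩ := b4
    obtain ⟨c40, c41, c42⟩ := c4
    have e4 : ((4:ℕ)*(k+1) : ℕ) = 4*k+4 := by ring
    rw [e4] at b40 b41 b42 c40 c41 c42
    refine ⟨?_, ?_, ?_⟩ <;>
      simp only [e0_add, e1_add, e2_add, e0_Xmul, e1_Xmul, e2_Xmul,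
        a30, a31, a32, c20, c21, c22, c30, c31, c32, b40, b41, b42, c40, c41, c42] <;>
      push_cast <;> ring

end NoThreeAux

theorem no_three_cycle_factorization_two_mod_four (n n₁ n₂ n₃ : ℕ)
    (h₁ : 0 < n₁) (h₂ : 0 < n₂) (h₃ : 0 < n₃) (hsum : n₁ + n₂ + n₃ = n)
    (hn : n % 4 = 2) (hn₁ : n₁ % 4 = 2) (hn₂ : n₂ % 4 = 2) (hn₃ : n₃ % 4 = 2) :
    domPoly (cycleGraph n) ≠
      domPoly (cycleGraph n₁) * domPoly (cycleGraph n₂) * domPoly (cycleGraph n₃) := by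
  intro h
  open NoThreeAux in
  obtain ⟨k₁, rfl⟩ : ∃ k, n₁ = 4*k+2 := ⟨n₁ / 4, by omega⟩
  obtain ⟨k₂, rfl⟩ : ∃ k, n₂ = 4*k+2 := ⟨n₂ / 4, by omega⟩
  obtain ⟨k₃, rfl⟩ : ∃ k, n₃ = 4*k+2 := ⟨n₃ / 4, by omega⟩
  obtain rfl : n = 4*(k₁+k₂+k₃+1)+2 := by omega
  have T1 := NoThreeAux.cycle_triple k₁
  have T2 := NoThreeAux.cycle_triple k₂
  have T3 := NoThreeAux.cycle_triple k₃
  have Tn := NoThreeAux.cycle_triple (k₁+k₂+k₃+1)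
  obtain ⟨a1, b1, c1⟩ := T1
  obtain ⟨a2, b2, c2⟩ := T2
  obtain ⟨a3, b3, c3⟩ := T3
  obtain ⟨an, bn, cn⟩ := Tn
  have happ := congrArg NoThreeAux.e2 h
  rw [cn] at happ
  rw [NoThreeAux.e2_mul, NoThreeAux.e2_mul, NoThreeAux.e1_mul, NoThreeAux.e0_mul,
    a1, a2, a3, b1, b2, b3, c1, c2, c3] at happ
  push_cast at happ
  nlinarith [sq_nonneg ((k₁:ℤ) + k₂ + k₃), mul_nonneg (Int.natCast_nonneg k₁) (Int.natCast_nonneg k₂),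
    mul_nonneg (Int.natCast_nonneg k₁) (Int.natCast_nonneg k₃),
    mul_nonneg (Int.natCast_nonneg k₂) (Int.natCast_nonneg k₃)]
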